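/- Let C₂, m, m_phys, c, Λ, λ_C be positive real numbers, let α = 1/137 and Z = 92, and set ℛ = (m_phys/m)·Λ·λ_C. If Z²·α²·m_phys·c²/2 ≤ √(2C₂)·5.67·Z·α^{8/7}·ℛ^{6/7}·m·c², then m ≥ 3.0·10^{−8}·C₂^{−7/2}·(Λλ_C)^{−6}·m_phys. -/

import Mathlib

open Real

theorem stmt_12 (C₂ m m_phys c Λ lamC α Z ℛ : ℝ)
    (hC₂ : 0 < C₂) (hm : 0 < m) (hmp : 0 < m_phys) (hc : 0 < c)
    (hΛ : 0 < Λ) (hlam : 0 < lamC)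
    (hα : α = 1 / 137) (hZ : Z = 92)
    (hℛ : ℛ = (m_phys / m) * Λ * lamC)
    (h : Z ^ 2 * α ^ 2 * m_phys * c ^ 2 / 2 ≤
      Real.sqrt (2 * C₂) * 5.67 * Z * α ^ ((8 : ℝ) / 7) * ℛ ^ ((6 : ℝ) / 7) * m * c ^ 2) :
    m ≥ 3.0e-8 * C₂ ^ (-(7 : ℝ) / 2) * (Λ * lamC) ^ (-(6 : ℝ)) * m_phys := by
  have hα0 : (0:ℝ) < α := by rw [hα]; norm_num
  have hZ0 : (0:ℝ) < Z := by rw [hZ]; norm_num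
  set K := Λ * lamC with hK
  have hK0 : 0 < K := mul_pos hΛ hlam
  have hℛ' : ℛ = m_phys * K / m := by rw [hℛ]; ring
  have hℛ0 : 0 < ℛ := by rw [hℛ']; positivity
  set s := Real.sqrt (2 * C₂) with hs
  have hs0 : 0 < s := Real.sqrt_pos.mpr (by linarith)
  -- raise h to the 7th power
  have hL0 : 0 ≤ Z ^ 2 * α ^ 2 * m_phys * c ^ 2 / 2 := by positivity
  have h7 := pow_le_pow_left₀ hL0 h 7
  have hα7 : (α ^ ((8:ℝ)/7)) ^ (7:ℕ) = α ^ (8:ℕ) := by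
    rw [← Real.rpow_natCast (α ^ ((8:ℝ)/7)) 7, ← Real.rpow_mul hα0.le]
    norm_num
  have hℛ7 : (ℛ ^ ((6:ℝ)/7)) ^ (7:ℕ) = ℛ ^ (6:ℕ) := by
    rw [← Real.rpow_natCast (ℛ ^ ((6:ℝ)/7)) 7, ← Real.rpow_mul hℛ0.le]
    norm_num
  rw [show (s * 5.67 * Z * α ^ ((8:ℝ)/7) * ℛ ^ ((6:ℝ)/7) * m * c ^ 2) ^ 7
      = s^7 * 5.67^7 * Z^7 * (α ^ ((8:ℝ)/7))^7 * (ℛ ^ ((6:ℝ)/7))^7 * m^7 * (c^2)^7 by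
        ring, hα7, hℛ7, hℛ'] at h7
  have e1 : (m_phys * K / m)^6 * m^7 = (m_phys * K)^6 * m := by
    field_simp
  -- cancel c and pass to polynomial form
  have key : Z^14 * α^14 * m_phys^7 ≤ 128 * (s^7 * 5.67^7 * Z^7 * α^8 * (m_phys*K)^6 * m) := by
    have hcpos : (0:ℝ) < (c^2)^7 := by positivity
    refine le_of_mul_le_mul_right ?_ hcpos
    calc Z^14 * α^14 * m_phys^7 * (c^2)^7
        = 128 * ((Z ^ 2 * α ^ 2 * m_phys * c ^ 2 / 2) ^ 7) := by ring
      _ ≤ 128 * (s^7 * 5.67^7 * Z^7 * α^8 * ((m_phys*K/m)^6) * m^7 * (c^2)^7) := by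
          nlinarith [h7]
      _ = 128 * (s^7 * 5.67^7 * Z^7 * α^8 * ((m_phys*K/m)^6 * m^7) * (c^2)^7) := by ring
      _ = 128 * (s^7 * 5.67^7 * Z^7 * α^8 * (m_phys*K)^6 * m) * (c^2)^7 := by
          rw [e1]; ring
  -- split the square root
  set t := Real.sqrt C₂ with ht
  have ht0 : 0 < t := Real.sqrt_pos.mpr hC₂
  have ht2 : t^2 = C₂ := Real.sq_sqrt hC₂.le
  set r := Real.sqrt 2 with hr
  have hr0 : 0 < r := Real.sqrt_pos.mpr (by norm_num)
  have hr2 : r^2 = 2 := Real.sq_sqrt (by norm_num)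
  have hsrt : s = r * t := by
    rw [hs, ht, hr, ← Real.sqrt_mul (by norm_num : (0:ℝ) ≤ 2)]
  have hs7 : s^7 = 8 * r * C₂^3 * t := by
    rw [hsrt]
    calc (r*t)^7 = (r^2)^3 * r * (t^2)^3 * t := by ring
      _ = 8 * r * C₂^3 * t := by rw [hr2, ht2]; norm_num
  rw [hs7] at key
  -- rewrite the rpow's in the goal
  have hCrw : C₂ ^ (-(7:ℝ)/2) = (C₂^3 * t)⁻¹ := by
    rw [show (-(7:ℝ)/2) = -(7/2) by norm_num, Real.rpow_neg hC₂.le]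
    congr 1
    rw [show (7:ℝ)/2 = (3:ℕ) + (1/2 : ℝ) by norm_num, Real.rpow_add hC₂,
      Real.rpow_natCast, ← Real.sqrt_eq_rpow, ht]
  have hKrw : K ^ (-(6:ℝ)) = (K^6)⁻¹ := by
    rw [Real.rpow_neg hK0.le]
    congr 1
    rw [← Real.rpow_natCast K 6]; norm_num
  rw [ge_iff_le, hCrw, hKrw]
  -- main estimate
  have hr_le : r ≤ 1.41422 := by
    rw [hr, show (1.41422:ℝ) = Real.sqrt (1.41422^2) by
      rw [Real.sqrt_sq (by norm_num)]]
    exact Real.sqrt_le_sqrt (by norm_num)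
  subst hα hZ
  have hX0 : (0:ℝ) < C₂^3 * t * K^6 * m * m_phys^6 := by positivity
  have hfin : 3e-8 * m_phys ^ 7 ≤ C₂^3 * t * K^6 * m * m_phys^6 := by
    nlinarith [key, hX0, mul_le_mul_of_nonneg_right hr_le hX0.le, pow_pos hmp 7]
  have hfin2 : 3e-8 * m_phys ≤ m * (C₂^3 * t * K^6) := by
    have h6 : (0:ℝ) < m_phys^6 := by positivity
    refine le_of_mul_le_mul_right ?_ h6
    calc 3e-8 * m_phys * m_phys^6 = 3e-8 * m_phys^7 := by ring
      _ ≤ C₂^3 * t * K^6 * m * m_phys^6 := hfin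
      _ = m * (C₂^3 * t * K^6) * m_phys^6 := by ring
  have hd0 : (0:ℝ) < C₂^3 * t * K^6 := by positivity
  calc 3.0e-8 * (C₂^3*t)⁻¹ * (K^6)⁻¹ * m_phys = (3e-8 * m_phys) / (C₂^3 * t * K^6) := by
        rw [show (3.0e-8 : ℝ) = 3e-8 by norm_num]
        field_simp
      _ ≤ (m * (C₂^3 * t * K^6)) / (C₂^3 * t * K^6) := by gcongr
      _ = m := by field_simp
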